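/- Let q be a non-integer positive rational that is not the reciprocal of any integer, and let α be a positive irreducible n-th root of q. Then for every nonzero b ∈ ℕ₀[α], the set of lengths L(b) is an arithmetic progression with common difference |n(q) − d(q)|, where q = n(q)/d(q) in lowest terms. -/

import Mathlib

/-- `a` is an (additive) atom of the submonoid `S`. -/
def IsAddAtomIn {R : Type*} [AddCommMonoid R] (S : AddSubmonoid R) (a : R) : Prop :=
  a ∈ S ∧ a ≠ 0 ∧ ∀ u v, u ∈ S → v ∈ S → u ≠ 0 → v ≠ 0 → a ≠ u + v

/-- The set of lengths of factorizations of `x` into atoms of `S`. -/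
def lengthsIn {R : Type*} [AddCommMonoid R] (S : AddSubmonoid R) (x : R) : Set ℕ :=
  {ℓ | ∃ l : Multiset R, (∀ a ∈ l, IsAddAtomIn S a) ∧ l.sum = x ∧ l.card = ℓ}

/-- `S` is a (possibly finite, possibly infinite) arithmetic progression with
common difference `δ`. -/
def IsAPWith (S : Set ℕ) (δ : ℕ) : Prop :=
  ∃ (a : ℕ) (m : ℕ∞), S = {x | ∃ k : ℕ, (k : ℕ∞) < m ∧ x = a + δ * k}

namespace S7
open Polynomial Finsupp

variable (α : ℝ) (a b n : ℕ)

noncomputable def fval (F : ℕ →₀ ℕ) : ℝ := F.sum fun k c => (c : ℝ) * α ^ k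
def flen (F : ℕ →₀ ℕ) : ℕ := F.sum fun _ c => c
def Down (F G : ℕ →₀ ℕ) : Prop :=
  ∃ i, G + Finsupp.single (i + n) b = F + Finsupp.single i a
def Reduced (F : ℕ →₀ ℕ) : Prop := ∀ i, F (i + n) < b
def fmu (F : ℕ →₀ ℕ) : ℕ := F.sum fun k c => c * (a + b) ^ k

lemma fval_add (F G : ℕ →₀ ℕ) : fval α (F + G) = fval α F + fval α G :=
  Finsupp.sum_add_index (by simp) (by intros; push_cast; ring)

lemma fval_single (k c : ℕ) : fval α (Finsupp.single k c) = c * α ^ k := by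
  simp [fval, Finsupp.sum_single_index]

lemma fval_zero : fval α 0 = 0 := by simp [fval]

lemma flen_add (F G : ℕ →₀ ℕ) : flen (F + G) = flen F + flen G :=
  Finsupp.sum_add_index (by simp) (by intros; ring)

lemma flen_single (k c : ℕ) : flen (Finsupp.single k c) = c := by
  simp [flen, Finsupp.sum_single_index]

lemma fmu_add (F G : ℕ →₀ ℕ) : fmu a b (F + G) = fmu a b F + fmu a b G :=
  Finsupp.sum_add_index (by simp) (by intros; ring)

lemma fmu_single (k c : ℕ) : fmu a b (Finsupp.single k c) = c * (a + b) ^ k := by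
  simp [fmu, Finsupp.sum_single_index]

variable {α a b n}

lemma fval_nonneg (hα : 0 ≤ α) (F : ℕ →₀ ℕ) : 0 ≤ fval α F :=
  Finset.sum_nonneg fun k _ => by positivity

lemma fval_pos (hα : 0 < α) {F : ℕ →₀ ℕ} (hF : F ≠ 0) : 0 < fval α F := by
  obtain ⟨k, hk⟩ := Finsupp.support_nonempty_iff.mpr hF
  refine Finset.sum_pos (fun j hj => ?_) ⟨k, hk⟩
  have : F j ≠ 0 := Finsupp.mem_support_iff.mp hj
  have h1 : (0:ℝ) < F j := by exact_mod_cast Nat.pos_of_ne_zero this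
  positivity

lemma flen_pos {F : ℕ →₀ ℕ} (hF : F ≠ 0) : 1 ≤ flen F := by
  obtain ⟨k, hk⟩ := Finsupp.support_nonempty_iff.mpr hF
  have h1 : F k ≤ flen F :=
    Finset.single_le_sum (f := fun j => F j) (fun _ _ => Nat.zero_le _) hk
  have : F k ≠ 0 := Finsupp.mem_support_iff.mp hk
  omega

lemma flen_zero_iff {F : ℕ →₀ ℕ} : flen F = 0 ↔ F = 0 := by
  constructor
  · intro h
    by_contra hF
    have := flen_pos hF
    omega
  · rintro rfl; simp [flen]

lemma down_val (hroot : (b : ℝ) * α ^ n = a) {F G : ℕ →₀ ℕ} (h : Down a b n F G) :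
    fval α G = fval α F := by
  obtain ⟨i, hi⟩ := h
  have := congrArg (fval α) hi
  rw [fval_add, fval_add, fval_single, fval_single] at this
  have hb : (b : ℝ) * α ^ (i + n) = a * α ^ i := by
    rw [pow_add, ← mul_assoc, mul_comm (b:ℝ) (α ^ i), mul_assoc, hroot]; ring
  nlinarith [this, hb]

lemma down_len {F G : ℕ →₀ ℕ} (h : Down a b n F G) :
    (flen G : ℤ) + b = flen F + a := by
  obtain ⟨i, hi⟩ := h
  have := congrArg flen hi
  rw [flen_add, flen_add, flen_single, flen_single] at this
  omega

lemma down_mu (ha : 1 ≤ a) (hb : 1 ≤ b) (hn : 1 ≤ n) {F G : ℕ →₀ ℕ}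
    (h : Down a b n F G) : fmu a b G < fmu a b F := by
  obtain ⟨i, hi⟩ := h
  have := congrArg (fmu a b) hi
  rw [fmu_add, fmu_add, fmu_single, fmu_single] at this
  have h1 : a * (a + b) ^ i < b * (a + b) ^ (i + n) := by
    have ht : 0 < (a + b) ^ i := pow_pos (by omega) i
    calc a * (a + b) ^ i < (b * (a + b)) * (a + b) ^ i := by
          have : a < b * (a + b) := by nlinarith
          exact (Nat.mul_lt_mul_right ht).mpr this
      _ = b * (a + b) ^ (i + 1) := by ring
      _ ≤ b * (a + b) ^ (i + n) := by
          have : (a + b) ^ (i + 1) ≤ (a + b) ^ (i + n) :=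
            Nat.pow_le_pow_right (by omega) (by omega)
          exact Nat.mul_le_mul_left _ this
  omega

lemma exists_reduced (ha : 1 ≤ a) (hb : 1 ≤ b) (hn : 1 ≤ n) (F : ℕ →₀ ℕ) :
    ∃ R, Reduced b n R ∧ Relation.ReflTransGen (Down a b n) F R := by
  generalize hμ : fmu a b F = μ
  induction μ using Nat.strong_induction_on generalizing F with
  | _ μ IH =>
    by_cases hred : Reduced b n F
    · exact ⟨F, hred, Relation.ReflTransGen.refl⟩
    · simp only [Reduced, not_forall, not_lt] at hred
      obtain ⟨i, hi⟩ := hred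
      set G : ℕ →₀ ℕ := F - Finsupp.single (i + n) b + Finsupp.single i a with hG
      have hle : Finsupp.single (i + n) b ≤ F := Finsupp.single_le_iff.mpr hi
      have hdown : Down a b n F G := by
        refine ⟨i, ?_⟩
        rw [hG, add_right_comm, tsub_add_cancel_of_le hle]
      obtain ⟨R, hR1, hR2⟩ := IH (fmu a b G) (hμ ▸ down_mu ha hb hn hdown) G rfl
      exact ⟨R, hR1, Relation.ReflTransGen.head hdown hR2⟩

lemma rtg_val (hroot : (b : ℝ) * α ^ n = a) {F R : ℕ →₀ ℕ}
    (h : Relation.ReflTransGen (Down a b n) F R) : fval α F = fval α R := by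
  induction h with
  | refl => rfl
  | tail _ hstep ih => rw [ih, down_val hroot hstep]

lemma rtg_len (hab : a ≠ b) {F R : ℕ →₀ ℕ}
    (h : Relation.ReflTransGen (Down a b n) F R) :
    ∃ k : ℕ, (flen F : ℤ) = flen R + k * ((b : ℤ) - a) := by
  induction h using Relation.ReflTransGen.head_induction_on with
  | refl => exact ⟨0, by simp⟩
  | head hstep _ ih =>
    obtain ⟨k, hk⟩ := ih
    have hs := down_len hstep
    exact ⟨k + 1, by push_cast; linear_combination hk - hs⟩

/-- along a path, every intermediate distance is realized -/
lemma rtg_interp (hab : a ≠ b) {F R : ℕ →₀ ℕ}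
    (h : Relation.ReflTransGen (Down a b n) F R) :
    ∀ k : ℕ, (flen F : ℤ) = flen R + k * ((b : ℤ) - a) →
    ∀ k' ≤ k, ∃ F', Relation.ReflTransGen (Down a b n) F' R ∧
      (flen F' : ℤ) = flen R + k' * ((b : ℤ) - a) := by
  have hd : ((b : ℤ) - a) ≠ 0 := by
    intro h0; apply hab; omega
  induction h using Relation.ReflTransGen.head_induction_on with
  | refl =>
    intro k hk k' hk'
    have : (k : ℤ) * ((b : ℤ) - a) = 0 := by omega
    have hk0 : k = 0 := by
      rcases mul_eq_zero.mp this with h | h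
      · exact_mod_cast h
      · exact absurd h hd
    subst hk0
    interval_cases k'
    exact ⟨R, Relation.ReflTransGen.refl, by simp⟩
  | head hstep htail ih =>
    intro k hk k' hk'
    obtain ⟨k₂, hk₂⟩ := rtg_len hab htail
    have hlen := down_len hstep
    have hkeq : k = k₂ + 1 := by
      have h2 : (k : ℤ) * ((b:ℤ) - a) = ((k₂:ℤ) + 1) * ((b:ℤ) - a) := by
        linear_combination hk₂ - hk - hlen
      have := mul_right_cancel₀ hd h2
      omega
    rcases eq_or_lt_of_le hk' with rfl | hlt
    · exact ⟨_, Relation.ReflTransGen.head hstep htail, hk⟩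
    · exact ih k₂ hk₂ k' (by omega)

noncomputable def toPolyZ (F : ℕ →₀ ℕ) : Polynomial ℤ :=
  F.sum fun k c => Polynomial.C (c : ℤ) * Polynomial.X ^ k

lemma toPolyZ_coeff (F : ℕ →₀ ℕ) (k : ℕ) : (toPolyZ F).coeff k = (F k : ℤ) := by
  rw [toPolyZ, Finsupp.sum, Polynomial.finset_sum_coeff]
  simp only [Polynomial.coeff_C_mul, Polynomial.coeff_X_pow, mul_ite, mul_one, mul_zero]
  rw [Finset.sum_ite_eq F.support k fun j => ((F j : ℤ))]
  by_cases h : k ∈ F.support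
  · simp [h]
  · simp [h, Finsupp.notMem_support_iff.mp h]

lemma aeval_toPolyZ (α : ℝ) (F : ℕ →₀ ℕ) :
    Polynomial.aeval α ((toPolyZ F).map (algebraMap ℤ ℚ)) = fval α F := by
  unfold fval
  rw [toPolyZ, Finsupp.sum, Polynomial.map_sum, map_sum, Finsupp.sum]
  refine Finset.sum_congr rfl fun k _ => ?_
  simp only [Polynomial.map_mul, Polynomial.map_C, Polynomial.map_pow, Polynomial.map_X,
    map_mul, map_pow, Polynomial.aeval_C, Polynomial.aeval_X]
  push_cast
  norm_num

lemma minpoly_eq (q : ℚ) (hq : 0 < q) {n : ℕ} (hn : 1 ≤ n) {α : ℝ} (hα : 0 < α)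
    (hroot : α ^ n = (q : ℝ)) (hirr : ∀ i, 1 ≤ i → i < n → Irrational (α ^ i)) :
    minpoly ℚ α = Polynomial.X ^ n - Polynomial.C q := by
  have haev : Polynomial.aeval α (Polynomial.X ^ n - Polynomial.C q : ℚ[X]) = 0 := by
    simp [hroot]
  have hint : IsIntegral ℚ α := ⟨X ^ n - C q, monic_X_pow_sub_C q (by omega), haev⟩
  have pdvd : minpoly ℚ α ∣ X ^ n - C q := minpoly.dvd ℚ α haev
  set p := minpoly ℚ α with hp
  have hpm : p.Monic := minpoly.monic hint
  have hp0 : p ≠ 0 := hpm.ne_zero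
  set d := p.natDegree with hd
  have dpos : 0 < d := minpoly.natDegree_pos hint
  have dle : d ≤ n := by
    have := natDegree_le_of_dvd pdvd (X_pow_sub_C_ne_zero (by omega) q)
    rwa [natDegree_X_pow_sub_C] at this
  have hrat : ¬ Irrational (α ^ d) := by
    set P := p.map (algebraMap ℚ ℂ) with hP
    have hPm : P.Monic := hpm.map _
    have hsp : Splits P := IsAlgClosed.splits P
    have hcard : Multiset.card P.roots = d := by
      rw [← hsp.natDegree_eq_card_roots, hP, natDegree_map]
    have hspP : Splits P := hsp
    have hprod : P = (Multiset.map (fun r => X - C r) P.roots).prod :=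
      hspP.eq_prod_roots_of_monic hPm
    have habs : ∀ r ∈ P.roots, ‖r‖ = α := by
      intro r hr
      have hroot' : P.eval r = 0 := isRoot_of_mem_roots hr
      have hdvd : P ∣ (X ^ n - C (q : ℂ)) := by
        have := Polynomial.map_dvd (algebraMap ℚ ℂ) pdvd
        simpa [Polynomial.map_sub, Polynomial.map_pow] using this
      have : (X ^ n - C (q : ℂ)).eval r = 0 := by
        obtain ⟨c, hc⟩ := hdvd
        rw [hc, eval_mul, hroot', zero_mul]
      have hrn : r ^ n = (q : ℂ) := by
        simp [eval_sub, eval_pow] at this; linear_combination this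
      have h1 : ‖r‖ ^ n = α ^ n := by
        rw [← norm_pow, hrn, hroot]
        rw [show ((q : ℂ)) = ((q : ℝ) : ℂ) by push_cast; ring]
        rw [Complex.norm_real, Real.norm_of_nonneg (by positivity)]
      exact (pow_left_strictMonoOn₀ (by omega : n ≠ 0)).injOn
        (Set.mem_setOf.mpr (norm_nonneg r)) (Set.mem_setOf.mpr hα.le) h1
    have heval0 : ‖P.eval 0‖ = α ^ d := by
      conv_lhs => rw [hprod]
      rw [eval_multiset_prod, Multiset.map_map,
          show ∀ m : Multiset ℂ, ‖m.prod‖ = (m.map (fun z => ‖z‖)).prod from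
            fun m => map_multiset_prod (normHom : ℂ →*₀ ℝ) m]
      rw [Multiset.map_map]
      have : ∀ r ∈ P.roots, ((fun z : ℂ => ‖z‖) ∘ eval 0 ∘ fun r => X - C r) r = α := by
        intro r hr
        simp only [Function.comp_apply, eval_sub, eval_X, eval_C, zero_sub, norm_neg]
        exact habs r hr
      rw [Multiset.map_congr rfl this, Multiset.map_const', Multiset.prod_replicate, hcard]
    have hPeval : P.eval 0 = ((p.coeff 0 : ℚ) : ℂ) := by
      rw [← coeff_zero_eq_eval_zero, hP, coeff_map]; rfl
    have : α ^ d = ((|p.coeff 0| : ℚ) : ℝ) := by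
      rw [← heval0, hPeval]
      rw [show ((p.coeff 0 : ℚ) : ℂ) = (((p.coeff 0 : ℚ) : ℝ) : ℂ) by push_cast; ring]
      rw [Complex.norm_real, Real.norm_eq_abs]
      exact (Rat.cast_abs _).symm
    rw [this]
    exact (Rat.not_irrational _)
  have hdn : d = n := by
    by_contra hne
    have hdlt : d < n := lt_of_le_of_ne dle hne
    exact hrat (hirr d dpos hdlt)
  obtain ⟨c, hc⟩ := pdvd
  have hc0 : c ≠ 0 := by
    intro h; rw [h, mul_zero] at hc; exact X_pow_sub_C_ne_zero (by omega : 0 < n) q hc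
  have hcdeg : c.natDegree = 0 := by
    have := natDegree_mul hp0 hc0
    rw [← hc, natDegree_X_pow_sub_C, ← hd, hdn] at this
    omega
  have hclead : c.coeff 0 = 1 := by
    have hlc := congrArg leadingCoeff hc
    rw [leadingCoeff_mul, hpm.leadingCoeff, one_mul] at hlc
    have : (X ^ n - C q).leadingCoeff = 1 := (monic_X_pow_sub_C q (by omega : n ≠ 0))
    rw [this] at hlc
    have h2 := hlc.symm
    rw [leadingCoeff, hcdeg] at h2
    exact h2
  have : c = 1 := by
    rw [eq_C_of_natDegree_eq_zero hcdeg, hclead, map_one]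
  rw [hc, this, mul_one]

lemma bridge (q : ℚ) {n : ℕ} (hn : 1 ≤ n) {α : ℝ}
    (hmin : minpoly ℚ α = Polynomial.X ^ n - Polynomial.C q)
    {a b : ℕ} (ha : (a : ℤ) = q.num) (hb : (b : ℤ) = q.den)
    {d : Polynomial ℤ} (hd : Polynomial.aeval α (d.map (algebraMap ℤ ℚ)) = 0) :
    ∃ h : Polynomial ℤ, d = (C (b : ℤ) * X ^ n - C (a : ℤ)) * h := by
  by_cases hd0 : d = 0
  · exact ⟨0, by simp [hd0]⟩
  have hb' : b = q.den := by exact_mod_cast hb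
  have hbq : (b : ℚ) * q = (a : ℚ) := by
    rw [hb', mul_comm, Rat.mul_den_eq_num]
    exact_mod_cast ha.symm
  have hb0 : (b : ℚ) ≠ 0 := by
    have : (0:ℤ) < q.den := by exact_mod_cast q.pos
    simp only [ne_eq, Nat.cast_eq_zero]
    intro h0
    rw [h0] at hb; omega
  set B : Polynomial ℤ := C (b : ℤ) * X ^ n - C (a : ℤ) with hB
  have hBmap : B.map (algebraMap ℤ ℚ) = C (b : ℚ) * (X ^ n - C q) := by
    rw [hB]
    rw [Polynomial.map_sub, Polynomial.map_mul, Polynomial.map_C, Polynomial.map_pow,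
      Polynomial.map_X, Polynomial.map_C, mul_sub, ← C_mul, hbq]
    push_cast
    ring_nf
  have hdvdQ : (X ^ n - C q) ∣ d.map (algebraMap ℤ ℚ) := by
    rw [← hmin]; exact minpoly.dvd ℚ α hd
  have hBdvdQ : B.map (algebraMap ℤ ℚ) ∣ d.map (algebraMap ℤ ℚ) := by
    obtain ⟨e, he⟩ := hdvdQ
    have hcb : C (b:ℚ) * C (b:ℚ)⁻¹ = 1 := by
      rw [← C_mul, mul_inv_cancel₀ hb0, C_1]
    exact ⟨C (b:ℚ)⁻¹ * e, by
      rw [hBmap, he]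
      linear_combination (-((X ^ n - C q) * e)) * hcb⟩
  have hBprim : B.IsPrimitive := by
    intro r hr
    rw [C_dvd_iff_dvd_coeff] at hr
    have h1 : r ∣ (b : ℤ) := by
      have := hr n
      rw [hB] at this
      simpa [coeff_sub, coeff_C_mul, coeff_X_pow, coeff_C, show ¬ n = 0 by omega] using this
    have h2 : r ∣ (a : ℤ) := by
      have := hr 0
      rw [hB] at this
      simp [coeff_sub, coeff_C_mul, coeff_X_pow, show ¬ (0 = n) by omega, coeff_C,
        zero_sub] at this
      exact this
    have hcop : IsCoprime (a : ℤ) (b : ℤ) := by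
      rw [Int.isCoprime_iff_gcd_eq_one]
      rw [ha, hb]
      exact_mod_cast q.reduced
    exact hcop.isUnit_of_dvd' h2 h1
  have hc0 : d.content ≠ 0 := by
    rw [Ne, content_eq_zero_iff]; exact hd0
  have hcq0 : ((d.content : ℚ)) ≠ 0 := by exact_mod_cast hc0
  have hdfact : d = C d.content * d.primPart := eq_C_content_mul_primPart d
  have hBdvdP : B.map (algebraMap ℤ ℚ) ∣ d.primPart.map (algebraMap ℤ ℚ) := by
    obtain ⟨e, he⟩ := hBdvdQ
    refine ⟨C ((d.content : ℚ))⁻¹ * e, ?_⟩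
    have hmapd : d.map (algebraMap ℤ ℚ) =
        C ((d.content : ℚ)) * d.primPart.map (algebraMap ℤ ℚ) := by
      conv_lhs => rw [hdfact]
      rw [Polynomial.map_mul, Polynomial.map_C]
      norm_num
    have hcb : C ((d.content:ℚ)) * C ((d.content:ℚ))⁻¹ = 1 := by
      rw [← C_mul, mul_inv_cancel₀ hcq0, C_1]
    have h3 := he
    rw [hmapd] at h3
    linear_combination C ((d.content:ℚ))⁻¹ * h3 -
      (d.primPart.map (algebraMap ℤ ℚ)) * hcb
  have hBdvd : B ∣ d.primPart := by
    rw [hBprim.dvd_iff_fraction_map_dvd_fraction_map ℚ]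
    exact hBdvdP
  exact dvd_trans hBdvd (primPart_dvd d)

end S7

open S7 in
theorem stmt_7 (q : ℚ) (hq : 0 < q)
    (hqint : ¬ ∃ m : ℤ, q = (m : ℚ)) (hqrec : ¬ ∃ m : ℤ, q⁻¹ = (m : ℚ))
    (n : ℕ) (hn : 1 ≤ n) (α : ℝ) (hαpos : 0 < α) (hroot : α ^ n = (q : ℝ))
    (hirr : ∀ i, 1 ≤ i → i < n → Irrational (α ^ i))
    (M : AddSubmonoid ℝ)
    (hM : M = AddSubmonoid.closure (Set.range fun k : ℕ => α ^ k)) :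
    ∀ b ∈ M, b ≠ 0 → IsAPWith (lengthsIn M b) (q.num - (q.den : ℤ)).natAbs := by
  subst hM
  intro β hβM hβ0
  classical
  set Mc := AddSubmonoid.closure (Set.range fun k : ℕ => α ^ k) with hMc
  set a : ℕ := q.num.toNat with haDef
  set b : ℕ := q.den with hbDef
  have hnum : 0 < q.num := Rat.num_pos.mpr hq
  have ha : (a : ℤ) = q.num := Int.toNat_of_nonneg hnum.le
  have hb : (b : ℤ) = (q.den : ℤ) := rfl
  have hb2 : 2 ≤ b := by
    rcases Nat.lt_or_ge b 2 with h | h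
    · exfalso
      have hb1 : b = 1 := by have := q.pos; omega
      have hd1 : q.den = 1 := by rw [← hbDef]; exact hb1
      exact hqint ⟨q.num, by rw [← Rat.num_div_den q, hd1]; norm_num⟩
    · exact h
  have ha2 : 2 ≤ a := by
    rcases Nat.lt_or_ge a 2 with h | h
    · exfalso
      have ha1 : q.num = 1 := by omega
      apply hqrec
      refine ⟨(q.den : ℤ), ?_⟩
      have h1 : q * (q.den : ℚ) = 1 := by
        rw [Rat.mul_den_eq_num, ha1]; norm_num
      rw [inv_eq_of_mul_eq_one_right h1]
      push_cast
      ring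
    · exact h
  have hab : a ≠ b := by
    intro h
    have hna : q.num.natAbs = a := by omega
    have hcop : Nat.Coprime a b := hna ▸ q.reduced
    rw [h] at hcop
    rw [Nat.Coprime, Nat.gcd_self] at hcop
    omega
  have hbq : (b : ℚ) * q = (a : ℚ) := by
    rw [hbDef, mul_comm, Rat.mul_den_eq_num]
    exact_mod_cast ha.symm
  have key : (b : ℝ) * α ^ n = a := by
    rw [hroot]
    exact_mod_cast congrArg (fun x : ℚ => (x : ℝ)) hbq
  have hmin := minpoly_eq q hq hn hαpos hroot hirr
  have hbridge : ∀ F G : ℕ →₀ ℕ, fval α F = fval α G →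
      ∃ h : Polynomial ℤ, toPolyZ F - toPolyZ G =
        (Polynomial.C (b:ℤ) * Polynomial.X ^ n - Polynomial.C (a:ℤ)) * h := by
    intro F G hFG
    refine bridge q hn hmin ha hb ?_
    rw [Polynomial.map_sub, map_sub, aeval_toPolyZ, aeval_toPolyZ, hFG, sub_self]
  -- uniqueness of reduced representatives
  have hru : ∀ F G : ℕ →₀ ℕ, Reduced b n F → Reduced b n G →
      fval α F = fval α G → F = G := by
    intro F G hF hG hval
    by_contra hne
    obtain ⟨h, hh⟩ := hbridge F G hval
    have hd0 : toPolyZ F - toPolyZ G ≠ 0 := by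
      intro h0
      apply hne
      have he : toPolyZ F = toPolyZ G := sub_eq_zero.mp h0
      ext k
      have := congrArg (fun p => Polynomial.coeff p k) he
      simp only [toPolyZ_coeff] at this
      exact_mod_cast this
    have hh0 : h ≠ 0 := fun h0 => hd0 (by rw [hh, h0, mul_zero])
    set m := h.natDegree with hm
    have hc1 : (toPolyZ F - toPolyZ G).coeff (m + n) = (b:ℤ) * h.coeff m := by
      rw [hh, sub_mul, Polynomial.coeff_sub, mul_assoc, Polynomial.coeff_C_mul,
        Polynomial.coeff_X_pow_mul, Polynomial.coeff_C_mul,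
        Polynomial.coeff_eq_zero_of_natDegree_lt (by omega : h.natDegree < m + n)]
      ring
    have hc2 : (toPolyZ F - toPolyZ G).coeff (m + n) = (F (m+n) : ℤ) - G (m+n) := by
      rw [Polynomial.coeff_sub, toPolyZ_coeff, toPolyZ_coeff]
    have hlc : h.coeff m ≠ 0 := by
      rw [hm]
      exact Polynomial.leadingCoeff_ne_zero.mpr hh0
    have heq : (F (m+n) : ℤ) - G (m+n) = (b:ℤ) * h.coeff m := by rw [← hc2, hc1]
    have hFb : F (m + n) < b := hF m
    have hGb : G (m + n) < b := hG m
    rcases lt_trichotomy (h.coeff m) 0 with hlt | hz | hgt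
    · have h1 : (b:ℤ) * h.coeff m ≤ (b:ℤ) * (-1) := by
        apply mul_le_mul_of_nonneg_left (by omega) (by positivity)
      omega
    · exact hlc hz
    · have h1 : (b:ℤ) * 1 ≤ (b:ℤ) * h.coeff m := by
        apply mul_le_mul_of_nonneg_left (by omega) (by positivity)
      omega
  have hpow_ne : ∀ k : ℕ, α ^ k ≠ 0 := fun k => (pow_pos hαpos k).ne'
  have hfval_mem : ∀ F : ℕ →₀ ℕ, fval α F ∈ Mc := by
    intro F
    induction F using Finsupp.induction with
    | zero => rw [fval_zero]; exact zero_mem _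
    | single_add k c G hk hc IH =>
      rw [fval_add, fval_single]
      refine add_mem ?_ IH
      rw [show ((c:ℝ) * α ^ k) = c • α ^ k from (nsmul_eq_mul c _).symm]
      have hk' : α ^ k ∈ Mc := AddSubmonoid.subset_closure (Set.mem_range_self k)
      exact AddSubmonoid.nsmul_mem Mc hk' c
  have hrep : ∀ x ∈ Mc, ∃ F : ℕ →₀ ℕ, fval α F = x := by
    let T : AddSubmonoid ℝ :=
      { carrier := {y | ∃ F : ℕ →₀ ℕ, fval α F = y}
        zero_mem' := show ∃ F : ℕ →₀ ℕ, fval α F = 0 from ⟨0, fval_zero α⟩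
        add_mem' := by
          rintro y z ⟨F, hF⟩ ⟨G, hG⟩
          exact ⟨F + G, by rw [fval_add, hF, hG]⟩ }
    have hle : Mc ≤ T := by
      rw [hMc]
      refine AddSubmonoid.closure_le.mpr ?_
      rintro x ⟨k, rfl⟩
      exact ⟨Finsupp.single k 1, by rw [fval_single]; norm_num⟩
    exact fun x hx => hle hx
  have hsingle_red : ∀ k : ℕ, Reduced b n (Finsupp.single k 1) := by
    intro k i
    rw [Finsupp.single_apply]
    split_ifs <;> omega
  have hpow_rep : ∀ (k : ℕ) (F : ℕ →₀ ℕ), fval α F = α ^ k → F = Finsupp.single k 1 := by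
    intro k F hF
    obtain ⟨R, hRred, hpath⟩ := exists_reduced (a := a) (b := b) (by omega) (by omega) hn F
    have hval : fval α R = fval α (Finsupp.single k 1) := by
      rw [← rtg_val key hpath, hF, fval_single]; norm_num
    have hReq : R = Finsupp.single k 1 := hru R _ hRred (hsingle_red k) hval
    rw [hReq] at hpath
    rcases Relation.ReflTransGen.cases_tail hpath with heq | ⟨F₁, _, hdown⟩
    · exact heq.symm
    · exfalso
      obtain ⟨i, hi⟩ := hdown
      have hpt := DFunLike.congr_fun hi i
      simp only [Finsupp.add_apply, Finsupp.single_apply] at hpt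
      split_ifs at hpt <;> omega
  have hatom : ∀ u : ℝ, IsAddAtomIn Mc u ↔ ∃ k : ℕ, u = α ^ k := by
    intro u
    constructor
    · rintro ⟨huM, hu0, hsplit⟩
      obtain ⟨F, hF⟩ := hrep u huM
      have hF0 : F ≠ 0 := by rintro rfl; rw [fval_zero] at hF; exact hu0 hF.symm
      obtain ⟨j, hj⟩ := Finsupp.support_nonempty_iff.mpr hF0
      have hj1 : 1 ≤ F j := Nat.pos_of_ne_zero (Finsupp.mem_support_iff.mp hj)
      have hle : Finsupp.single j 1 ≤ F := Finsupp.single_le_iff.mpr hj1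
      set F' := F - Finsupp.single j 1 with hF'
      have hdec : Finsupp.single j 1 + F' = F := add_tsub_cancel_of_le hle
      have hlen : flen F = 1 + flen F' := by rw [← hdec, flen_add, flen_single]
      have hF'0 : F' = 0 := by
        by_contra hne
        refine hsplit (α ^ j) (fval α F') (AddSubmonoid.subset_closure ⟨j, rfl⟩)
          (hfval_mem F') (hpow_ne j) (fval_pos hαpos hne).ne' ?_
        rw [← hF, ← hdec, fval_add, fval_single]; norm_num
      refine ⟨j, ?_⟩
      rw [← hF, ← hdec, hF'0, add_zero, fval_single]; norm_num
    · rintro ⟨k, rfl⟩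
      refine ⟨AddSubmonoid.subset_closure ⟨k, rfl⟩, hpow_ne k, ?_⟩
      intro u v hu hv hu0 hv0 heq
      obtain ⟨Fu, hFu⟩ := hrep u hu
      obtain ⟨Fv, hFv⟩ := hrep v hv
      have hsum : fval α (Fu + Fv) = α ^ k := by rw [fval_add, hFu, hFv, ← heq]
      have hs := hpow_rep k _ hsum
      have hlen := congrArg flen hs
      rw [flen_add, flen_single] at hlen
      have hFu0 : Fu ≠ 0 := by rintro rfl; rw [fval_zero] at hFu; exact hu0 hFu.symm
      have hFv0 : Fv ≠ 0 := by rintro rfl; rw [fval_zero] at hFv; exact hv0 hFv.symm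
      have h1 := flen_pos hFu0
      have h2 := flen_pos hFv0
      omega
  have hlengths : lengthsIn Mc β = {ℓ | ∃ F : ℕ →₀ ℕ, fval α F = β ∧ flen F = ℓ} := by
    ext ℓ
    simp only [lengthsIn, Set.mem_setOf_eq]
    constructor
    · rintro ⟨l, hatoms, hsum, hcard⟩
      have hbuild : ∀ l : Multiset ℝ, (∀ x ∈ l, ∃ k : ℕ, x = α ^ k) →
          ∃ F : ℕ →₀ ℕ, fval α F = l.sum ∧ flen F = Multiset.card l := by
        intro l
        induction l using Multiset.induction with
        | empty => exact fun _ => ⟨0, by rw [fval_zero]; simp, by simp [flen]⟩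
        | cons x l IH =>
          intro hl
          obtain ⟨F, hF1, hF2⟩ := IH (fun y hy => hl y (Multiset.mem_cons_of_mem hy))
          obtain ⟨k, rfl⟩ := hl x (Multiset.mem_cons_self x l)
          refine ⟨Finsupp.single k 1 + F, ?_, ?_⟩
          · rw [fval_add, fval_single, Multiset.sum_cons, hF1]; push_cast; ring
          · rw [flen_add, flen_single, Multiset.card_cons, hF2]; omega
      obtain ⟨F, h1, h2⟩ := hbuild l (fun x hx => (hatom x).mp (hatoms x hx))
      exact ⟨F, by rw [h1, hsum], by rw [h2, hcard]⟩
    · rintro ⟨F, hF, hflen⟩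
      have hbuild : ∀ F : ℕ →₀ ℕ, ∃ l : Multiset ℝ, (∀ x ∈ l, ∃ k : ℕ, x = α ^ k) ∧
          l.sum = fval α F ∧ Multiset.card l = flen F := by
        intro F
        induction F using Finsupp.induction with
        | zero => exact ⟨0, by simp, by rw [fval_zero]; simp, by simp [flen]⟩
        | single_add k c G hk hc IH =>
          obtain ⟨l, hl1, hl2, hl3⟩ := IH
          refine ⟨Multiset.replicate c (α ^ k) + l, ?_, ?_, ?_⟩
          · intro x hx
            rcases Multiset.mem_add.mp hx with h | h
            · exact ⟨k, Multiset.eq_of_mem_replicate h⟩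
            · exact hl1 x h
          · rw [Multiset.sum_add, Multiset.sum_replicate, hl2, fval_add, fval_single,
              nsmul_eq_mul]
          · rw [Multiset.card_add, Multiset.card_replicate, hl3, flen_add, flen_single]
      obtain ⟨l, hl1, hl2, hl3⟩ := hbuild F
      exact ⟨l, fun x hx => (hatom x).mpr (hl1 x hx), by rw [hl2, hF], by rw [hl3, hflen]⟩
  -- reduced representative of β
  obtain ⟨F0, hF0⟩ := hrep β hβM
  obtain ⟨R, hRred, hRpath⟩ := exists_reduced (a := a) (b := b) (by omega) (by omega) hn F0
  have hRval : fval α R = β := by rw [← rtg_val key hRpath, hF0]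
  set D : ℤ := (b:ℤ) - a with hD
  set J : Set ℕ := {k | ∃ F : ℕ →₀ ℕ, fval α F = β ∧ (flen F : ℤ) = flen R + k * D}
    with hJdef
  have hJ0 : 0 ∈ J := ⟨R, hRval, by simp⟩
  have hJdc : ∀ k ∈ J, ∀ k' ≤ k, k' ∈ J := by
    rintro k ⟨F, hF, hFl⟩ k' hk'
    obtain ⟨R', hR'red, hR'path⟩ := exists_reduced (a := a) (b := b) (by omega) (by omega) hn F
    have hR'eq : R' = R := hru R' R hR'red hRred (by rw [← rtg_val key hR'path, hF, hRval])
    rw [hR'eq] at hR'path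
    obtain ⟨F', hF'path, hF'len⟩ := rtg_interp hab hR'path k hFl k' hk'
    exact ⟨F', by rw [rtg_val key hF'path, hRval], hF'len⟩
  have hLJ : lengthsIn Mc β = {ℓ : ℕ | ∃ k ∈ J, (ℓ : ℤ) = flen R + k * D} := by
    rw [hlengths]
    ext ℓ
    simp only [Set.mem_setOf_eq]
    constructor
    · rintro ⟨F, hF, rfl⟩
      obtain ⟨R', hR'red, hR'path⟩ := exists_reduced (a := a) (b := b) (by omega) (by omega) hn F
      have hR'eq : R' = R := hru R' R hR'red hRred
        (by rw [← rtg_val key hR'path, hF, hRval])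
      rw [hR'eq] at hR'path
      obtain ⟨k, hk⟩ := rtg_len hab hR'path
      exact ⟨k, ⟨F, hF, hk⟩, hk⟩
    · rintro ⟨k, ⟨F, hF, hFl⟩, hℓ⟩
      refine ⟨F, hF, ?_⟩
      have : (flen F : ℤ) = (ℓ : ℤ) := by rw [hFl, hℓ]
      exact_mod_cast this
  have hδ : (q.num - (q.den : ℤ)).natAbs = ((a:ℤ) - b).natAbs := by rw [ha, hb]
  rcases Nat.lt_or_ge a b with hcase | hcase
  · -- a < b : δ = b - a, lengths increase from flen R
    have hδ2 : (q.num - (q.den:ℤ)).natAbs = b - a := by rw [hδ]; omega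
    have hDpos : ((b - a : ℕ) : ℤ) = D := by rw [hD]; omega
    rw [hδ2]
    by_cases hJall : ∀ k : ℕ, k ∈ J
    · refine ⟨flen R, ⊤, ?_⟩
      rw [hLJ]
      ext x
      simp only [Set.mem_setOf_eq]
      constructor
      · rintro ⟨k, _, hx⟩
        refine ⟨k, ENat.coe_lt_top k, ?_⟩
        have hz : (x:ℤ) = ((flen R + (b - a) * k : ℕ) : ℤ) := by
          push_cast
          rw [hDpos]
          linarith [hx]
        exact_mod_cast hz
      · rintro ⟨k, -, rfl⟩
        refine ⟨k, hJall k, ?_⟩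
        push_cast
        rw [hDpos]
        ring
    · push_neg at hJall
      obtain ⟨k₁, hk₁⟩ := hJall
      have hex : ∃ k, k ∉ J := ⟨k₁, hk₁⟩
      set k₀ := Nat.find hex with hk₀def
      have hk₀ : k₀ ∉ J := Nat.find_spec hex
      have hJiff : ∀ k, k ∈ J ↔ k < k₀ := by
        intro k
        constructor
        · intro hk
          by_contra h
          exact hk₀ (hJdc k hk k₀ (by omega))
        · intro h
          by_contra hc
          exact (Nat.find_min hex h) hc
      refine ⟨flen R, (k₀ : ℕ∞), ?_⟩
      rw [hLJ]
      ext x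
      simp only [Set.mem_setOf_eq]
      constructor
      · rintro ⟨k, hkJ, hx⟩
        refine ⟨k, by exact_mod_cast (hJiff k).mp hkJ, ?_⟩
        have hz : (x:ℤ) = ((flen R + (b - a) * k : ℕ) : ℤ) := by
          push_cast
          rw [hDpos]
          linarith [hx]
        exact_mod_cast hz
      · rintro ⟨k, hk, rfl⟩
        refine ⟨k, (hJiff k).mpr (by exact_mod_cast hk), ?_⟩
        push_cast
        rw [hDpos]
        ring
  · -- b < a : δ = a - b, lengths decrease from flen R
    have hba : b < a := by omega
    have hδ2 : (q.num - (q.den:ℤ)).natAbs = a - b := by rw [hδ]; omega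
    have hDneg : ((a - b : ℕ) : ℤ) = -D := by rw [hD]; omega
    rw [hδ2]
    have hbound : ∀ k ∈ J, k ≤ flen R := by
      rintro k ⟨F, hF, hFl⟩
      have h1 : (0:ℤ) ≤ (flen F : ℤ) := Int.natCast_nonneg _
      have h2 : (k:ℤ) * 1 ≤ (k:ℤ) * (-D) := by
        apply mul_le_mul_of_nonneg_left (by omega) (Int.natCast_nonneg _)
      have h3 : (k : ℤ) ≤ (flen R : ℤ) := by linarith [hFl]
      exact_mod_cast h3
    have hex : ∃ k, k ∉ J := ⟨flen R + 1, fun h => by have := hbound _ h; omega⟩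
    set k₀ := Nat.find hex with hk₀def
    have hk₀ : k₀ ∉ J := Nat.find_spec hex
    have hJiff : ∀ k, k ∈ J ↔ k < k₀ := by
      intro k
      constructor
      · intro hk
        by_contra h
        exact hk₀ (hJdc k hk k₀ (by omega))
      · intro h
        by_contra hc
        exact (Nat.find_min hex h) hc
    have hk₀pos : 1 ≤ k₀ := by
      by_contra h
      have hz : k₀ = 0 := by omega
      exact hk₀ (hz ▸ hJ0)
    obtain ⟨Fm, hFm, hFml⟩ : (k₀ - 1) ∈ J := (hJiff _).mpr (by omega)
    have hc2 : ((k₀ - 1 : ℕ) : ℤ) = (k₀ : ℤ) - 1 := by omega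
    rw [hc2] at hFml
    refine ⟨flen Fm, (k₀ : ℕ∞), ?_⟩
    rw [hLJ]
    ext x
    simp only [Set.mem_setOf_eq]
    constructor
    · rintro ⟨k, hkJ, hx⟩
      have hkk : k < k₀ := (hJiff k).mp hkJ
      refine ⟨k₀ - 1 - k, by exact_mod_cast (show k₀ - 1 - k < k₀ by omega), ?_⟩
      have hc : ((k₀ - 1 - k : ℕ) : ℤ) = (k₀ : ℤ) - 1 - k := by omega
      have hz : (x:ℤ) = ((flen Fm + (a - b) * (k₀ - 1 - k) : ℕ) : ℤ) := by
        push_cast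
        rw [hDneg, hc]
        linear_combination hx - hFml
      exact_mod_cast hz
    · rintro ⟨j, hj, rfl⟩
      have hj' : j < k₀ := by exact_mod_cast hj
      have hkJ : (k₀ - 1 - j) ∈ J := (hJiff _).mpr (by omega)
      obtain ⟨F, hF, hFl⟩ := hkJ
      refine ⟨k₀ - 1 - j, (hJiff _).mpr (by omega), ?_⟩
      have hc : ((k₀ - 1 - j : ℕ) : ℤ) = (k₀ : ℤ) - 1 - j := by omega
      push_cast
      rw [hDneg, hc]
      linear_combination hFml
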